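/- Let μ₁, μ₂, ρ, β, b₁, b₂, C₃, C₄ be positive reals, set D = C₄⁴(μ₁b₁ + μ₂b₂ + ρ√(b₁b₂)) and E = (1/3)(2b₁^{3/2} + b₂^{3/2})C₃³, and define h(t) = (1/2)t² − (1/4)Dt³ − (1/2)βEt^{3/2} for t > 0. If β(2b₁^{3/2}+b₂^{3/2})C₃³C₄²√(μ₁b₁+μ₂b₂+ρ√(b₁b₂)) < 2√6/3, then h has exactly two critical points in (0,∞): a local minimum point t₁ with h(t₁) < 0 and a global maximum point t₂ > t₁ with h(t₂) > 0. Moreover h has exactly two zeros 0 < R₀ < R₁ in (0,∞), and h(t) > 0 if and only if R₀ < t < R₁. -/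

import Mathlib

noncomputable section

open Set

/-- `D = C₄⁴(μ₁b₁ + μ₂b₂ + ρ√(b₁b₂))`. -/
def Dconst (μ₁ μ₂ ρ b₁ b₂ C₄ : ℝ) : ℝ :=
  C₄ ^ 4 * (μ₁ * b₁ + μ₂ * b₂ + ρ * Real.sqrt (b₁ * b₂))

/-- `E = (1/3)(2b₁^{3/2} + b₂^{3/2})C₃³`. -/
def Econst (b₁ b₂ C₃ : ℝ) : ℝ :=
  (1 / 3) * (2 * b₁ ^ ((3 : ℝ) / 2) + b₂ ^ ((3 : ℝ) / 2)) * C₃ ^ 3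

/-- `h(t) = (1/2)t² − (1/4)Dt³ − (1/2)βEt^{3/2}`. -/
def hfun (β D E : ℝ) : ℝ → ℝ :=
  fun t => (1 / 2) * t ^ 2 - (1 / 4) * D * t ^ 3 - (1 / 2) * β * E * t ^ ((3 : ℝ) / 2)

set_option maxHeartbeats 1000000 in
lemma hfun_aux (β D E : ℝ) (hβ : 0 < β) (hD : 0 < D) (hE : 0 < E)
    (hkey : 3 * β * E / 4 * Real.sqrt (6 * D) < 1) :
    ∃ t₁ t₂ R₀ R₁ : ℝ,
      0 < t₁ ∧ t₁ < t₂ ∧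
      deriv (hfun β D E) t₁ = 0 ∧
      deriv (hfun β D E) t₂ = 0 ∧
      (∀ t : ℝ, 0 < t → deriv (hfun β D E) t = 0 → t = t₁ ∨ t = t₂) ∧
      IsLocalMin (hfun β D E) t₁ ∧
      hfun β D E t₁ < 0 ∧
      (∀ t : ℝ, 0 < t → hfun β D E t ≤ hfun β D E t₂) ∧
      0 < hfun β D E t₂ ∧
      0 < R₀ ∧ R₀ < R₁ ∧
      hfun β D E R₀ = 0 ∧ hfun β D E R₁ = 0 ∧
      (∀ t : ℝ, 0 < t → hfun β D E t = 0 → t = R₀ ∨ t = R₁) ∧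
      (∀ t : ℝ, 0 < t → (0 < hfun β D E t ↔ R₀ < t ∧ t < R₁)) := by
  have hβE : 0 < β * E := mul_pos hβ hE
  set a : ℝ := 3 * D / 4 with ha
  set c : ℝ := 3 * β * E / 4 with hc
  have hapos : 0 < a := by rw [ha]; linarith
  have hcpos : 0 < c := by rw [hc]; linarith
  set g : ℝ → ℝ := fun s => s - a * s ^ 3 with hgdef
  have hgc : Continuous g := by
    rw [hgdef]; exact continuous_id.sub (continuous_const.mul (continuous_pow 3))
  have hgd : ∀ s : ℝ, HasDerivAt g (1 - a * (3 * s ^ 2)) s := by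
    intro s
    have h1 := (hasDerivAt_id s).sub ((hasDerivAt_pow 3 s).const_mul a)
    have h2 : HasDerivAt g (1 - a * (↑3 * s ^ (3 - 1))) s := h1
    convert h2 using 1
  set sstar : ℝ := Real.sqrt (1 / (3 * a)) with hsstar
  set shat : ℝ := Real.sqrt (1 / (2 * a)) with hshat
  set sbig : ℝ := Real.sqrt (1 / a) with hsbig
  have hsstar2 : sstar ^ 2 = 1 / (3 * a) := Real.sq_sqrt (by positivity)
  have hshat2 : shat ^ 2 = 1 / (2 * a) := Real.sq_sqrt (by positivity)
  have hsbig2 : sbig ^ 2 = 1 / a := Real.sq_sqrt (by positivity)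
  have hsstarpos : 0 < sstar := Real.sqrt_pos.2 (by positivity)
  have hshatpos : 0 < shat := Real.sqrt_pos.2 (by positivity)
  have hsstar_lt_shat : sstar < shat := by
    apply Real.sqrt_lt_sqrt (by positivity)
    rw [div_lt_div_iff₀ (by linarith) (by linarith)]; linarith
  have hshat_lt_sbig : shat < sbig := by
    apply Real.sqrt_lt_sqrt (by positivity)
    rw [div_lt_div_iff₀ (by linarith) hapos]; linarith
  -- monotonicity of g
  have hgmono : StrictMonoOn g (Icc 0 sstar) := by
    apply strictMonoOn_of_deriv_pos (convex_Icc 0 sstar) hgc.continuousOn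
    intro s hs
    rw [interior_Icc] at hs
    rw [(hgd s).deriv]
    have h1 : s ^ 2 < sstar ^ 2 := by nlinarith [hs.1, hs.2]
    rw [hsstar2] at h1
    have h2 : a * (3 * s ^ 2) < a * (3 * (1 / (3 * a))) :=
      mul_lt_mul_of_pos_left (by linarith) hapos
    have h3 : a * (3 * (1 / (3 * a))) = 1 := by field_simp
    linarith
  have hganti : StrictAntiOn g (Ici sstar) := by
    apply strictAntiOn_of_deriv_neg (convex_Ici sstar) hgc.continuousOn
    intro s hs
    rw [interior_Ici] at hs
    rw [(hgd s).deriv]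
    have h1 : sstar ^ 2 < s ^ 2 := by nlinarith [mem_Ioi.mp hs, hsstarpos]
    rw [hsstar2] at h1
    have h2 : a * (3 * (1 / (3 * a))) < a * (3 * s ^ 2) :=
      mul_lt_mul_of_pos_left (by linarith) hapos
    have h3 : a * (3 * (1 / (3 * a))) = 1 := by field_simp
    linarith
  -- values of g
  have hg0 : g 0 = 0 := by rw [hgdef]; simp
  have hgshat : g shat = shat / 2 := by
    have h3 : shat ^ 3 = shat ^ 2 * shat := by ring
    show shat - a * shat ^ 3 = shat / 2
    rw [h3, hshat2]
    field_simp
    ring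
  have hgsbig : g sbig = 0 := by
    have h3 : sbig ^ 3 = sbig ^ 2 * sbig := by ring
    show sbig - a * sbig ^ 3 = 0
    rw [h3, hsbig2]
    field_simp
    simp
  -- key smallness: c < shat / 2
  have hc_lt : c < shat / 2 := by
    have h6D : (6 : ℝ) * D = 2 ^ 2 * (2 * a) := by rw [ha]; ring
    have hsq6 : Real.sqrt (6 * D) = 2 * Real.sqrt (2 * a) := by
      rw [h6D, Real.sqrt_mul (by positivity), Real.sqrt_sq (by norm_num : (0:ℝ) ≤ 2)]
    have h2a : 0 < Real.sqrt (2 * a) := Real.sqrt_pos.2 (by linarith)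
    have hprod : shat * Real.sqrt (2 * a) = 1 := by
      rw [hshat, ← Real.sqrt_mul (by positivity), show 1 / (2 * a) * (2 * a) = 1 by field_simp,
        Real.sqrt_one]
    have h2 : (2 * c) * Real.sqrt (2 * a) < shat * Real.sqrt (2 * a) := by
      rw [hprod]
      calc (2 * c) * Real.sqrt (2 * a) = c * (2 * Real.sqrt (2 * a)) := by ring
        _ = c * Real.sqrt (6 * D) := by rw [hsq6]
        _ < 1 := hkey
    have := lt_of_mul_lt_mul_right h2 h2a.le
    linarith
  have hcltgshat : c < g shat := by rw [hgshat]; exact hc_lt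
  have hcltgsstar : c < g sstar := by
    have := hganti (self_mem_Ici) (mem_Ici.2 hsstar_lt_shat.le) hsstar_lt_shat
    linarith
  -- the two roots of g = c
  obtain ⟨s₁, hs₁mem, hgs₁⟩ :=
    intermediate_value_Ioo hsstarpos.le hgc.continuousOn
      (show c ∈ Ioo (g 0) (g sstar) by rw [hg0]; exact ⟨hcpos, hcltgsstar⟩)
  obtain ⟨s₂, hs₂mem, hgs₂⟩ :=
    intermediate_value_Ioo' hshat_lt_sbig.le hgc.continuousOn
      (show c ∈ Ioo (g sbig) (g shat) by rw [hgsbig]; exact ⟨hcpos, hcltgshat⟩)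
  have hs₁pos : 0 < s₁ := hs₁mem.1
  have hs₂pos : 0 < s₂ := lt_trans hshatpos hs₂mem.1
  have hs₂gtsstar : sstar < s₂ := lt_trans hsstar_lt_shat hs₂mem.1
  have hs₁lts₂ : s₁ < s₂ := lt_trans hs₁mem.2 hs₂gtsstar
  -- the function H
  set H : ℝ → ℝ := hfun β D E with hH
  have hHcont : Continuous H := by
    rw [hH]; unfold hfun
    exact ((continuous_const.mul (continuous_pow 2)).sub
        (continuous_const.mul (continuous_pow 3))).sub
      (continuous_const.mul (continuous_iff_continuousAt.2 fun x =>
        Real.continuousAt_rpow_const x _ (Or.inr (by norm_num))))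
  have hH0 : H 0 = 0 := by
    rw [hH]
    simp [hfun, Real.zero_rpow (show ((3:ℝ)/2) ≠ 0 by norm_num)]
  have hHderiv : ∀ t : ℝ, 0 < t → HasDerivAt H (t - a * t ^ 2 - c * Real.sqrt t) t := by
    intro t ht
    have H3 : HasDerivAt (fun x : ℝ => x ^ ((3:ℝ)/2)) (((3:ℝ)/2) * t ^ ((3:ℝ)/2 - 1)) t :=
      Real.hasDerivAt_rpow_const (Or.inl ht.ne')
    have Hm := (((hasDerivAt_pow 2 t).const_mul ((1:ℝ)/2)).sub
        ((hasDerivAt_pow 3 t).const_mul ((1/4) * D))).sub (H3.const_mul ((1/2) * β * E))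
    have hfn : HasDerivAt H ((1/2 : ℝ) * (↑2 * t ^ (2-1)) - (1/4) * D * (↑3 * t ^ (3-1))
        - (1/2) * β * E * (((3:ℝ)/2) * t ^ ((3:ℝ)/2 - 1))) t := Hm
    convert hfn using 1
    rw [show (3:ℝ)/2 - 1 = (1/2 : ℝ) by norm_num, ← Real.sqrt_eq_rpow]
    push_cast
    rw [ha, hc]
    ring
  have hderiv_sq : ∀ s : ℝ, 0 < s → deriv H (s ^ 2) = s * (g s - c) := by
    intro s hs
    rw [(hHderiv (s ^ 2) (by positivity)).deriv, Real.sqrt_sq hs.le]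
    show _ = s * ((s - a * s ^ 3) - c)
    ring
  have hderiv_t : ∀ t : ℝ, 0 < t → deriv H t = Real.sqrt t * (g (Real.sqrt t) - c) := by
    intro t ht
    have := hderiv_sq (Real.sqrt t) (Real.sqrt_pos.2 ht)
    rwa [Real.sq_sqrt ht.le] at this
  set t₁ : ℝ := s₁ ^ 2 with ht₁def
  set t₂ : ℝ := s₂ ^ 2 with ht₂def
  have ht₁pos : 0 < t₁ := pow_pos hs₁pos 2
  have ht₂pos : 0 < t₂ := pow_pos hs₂pos 2
  have ht₁ltt₂ : t₁ < t₂ := by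
    rw [ht₁def, ht₂def]
    exact pow_lt_pow_left₀ hs₁lts₂ hs₁pos.le two_ne_zero
  have hsqrt_t₁ : Real.sqrt t₁ = s₁ := by rw [ht₁def]; exact Real.sqrt_sq hs₁pos.le
  have hsqrt_t₂ : Real.sqrt t₂ = s₂ := by rw [ht₂def]; exact Real.sqrt_sq hs₂pos.le
  have hd₁ : deriv H t₁ = 0 := by rw [ht₁def, hderiv_sq s₁ hs₁pos, hgs₁]; ring
  have hd₂ : deriv H t₂ = 0 := by rw [ht₂def, hderiv_sq s₂ hs₂pos, hgs₂]; ring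
  -- uniqueness of critical points
  have hcrit : ∀ t : ℝ, 0 < t → deriv H t = 0 → t = t₁ ∨ t = t₂ := by
    intro t ht hdt
    rw [hderiv_t t ht] at hdt
    have hst : 0 < Real.sqrt t := Real.sqrt_pos.2 ht
    have hgt : g (Real.sqrt t) = c := by
      rcases mul_eq_zero.mp hdt with h | h
      · exact absurd h hst.ne'
      · linarith [sub_eq_zero.mp h]
    rcases le_total (Real.sqrt t) sstar with hle | hge
    · left
      have heq : Real.sqrt t = s₁ :=
        hgmono.injOn ⟨hst.le, hle⟩ ⟨hs₁pos.le, hs₁mem.2.le⟩ (by rw [hgt, hgs₁])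
      rw [ht₁def, ← heq]
      exact (Real.sq_sqrt ht.le).symm
    · right
      have heq : Real.sqrt t = s₂ :=
        hganti.injOn (mem_Ici.2 hge) (mem_Ici.2 hs₂gtsstar.le) (by rw [hgt, hgs₂])
      rw [ht₂def, ← heq]
      exact (Real.sq_sqrt ht.le).symm
  -- monotonicity of H
  have hmono1 : StrictAntiOn H (Icc 0 t₁) := by
    apply strictAntiOn_of_deriv_neg (convex_Icc _ _) hHcont.continuousOn
    intro t htm
    rw [interior_Icc] at htm
    obtain ⟨ht0, htt₁⟩ := htm
    rw [hderiv_t t ht0]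
    have hst : 0 < Real.sqrt t := Real.sqrt_pos.2 ht0
    have h1 : Real.sqrt t < s₁ := by
      have := Real.sqrt_lt_sqrt ht0.le htt₁
      rwa [hsqrt_t₁] at this
    have h2 : g (Real.sqrt t) < c := by
      rw [← hgs₁]
      exact hgmono ⟨hst.le, (h1.trans hs₁mem.2).le⟩ ⟨hs₁pos.le, hs₁mem.2.le⟩ h1
    exact mul_neg_of_pos_of_neg hst (by linarith)
  have hmono2 : StrictMonoOn H (Icc t₁ t₂) := by
    apply strictMonoOn_of_deriv_pos (convex_Icc _ _) hHcont.continuousOn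
    intro t htm
    rw [interior_Icc] at htm
    obtain ⟨h1, h2⟩ := htm
    have ht0 : 0 < t := lt_trans ht₁pos h1
    rw [hderiv_t t ht0]
    have hst : 0 < Real.sqrt t := Real.sqrt_pos.2 ht0
    have hs1lt : s₁ < Real.sqrt t := by
      have := Real.sqrt_lt_sqrt ht₁pos.le h1
      rwa [hsqrt_t₁] at this
    have hlts2 : Real.sqrt t < s₂ := by
      have := Real.sqrt_lt_sqrt ht0.le h2
      rwa [hsqrt_t₂] at this
    have hgt : c < g (Real.sqrt t) := by
      rcases le_total (Real.sqrt t) sstar with hle | hge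
      · rw [← hgs₁]
        exact hgmono ⟨hs₁pos.le, hs₁mem.2.le⟩ ⟨hst.le, hle⟩ hs1lt
      · rw [← hgs₂]
        exact hganti (mem_Ici.2 hge) (mem_Ici.2 hs₂gtsstar.le) hlts2
    exact mul_pos hst (by linarith)
  have hmono3 : StrictAntiOn H (Ici t₂) := by
    apply strictAntiOn_of_deriv_neg (convex_Ici _) hHcont.continuousOn
    intro t htm
    rw [interior_Ici] at htm
    have ht0 : 0 < t := lt_trans ht₂pos htm
    rw [hderiv_t t ht0]
    have hst : 0 < Real.sqrt t := Real.sqrt_pos.2 ht0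
    have hs2lt : s₂ < Real.sqrt t := by
      have := Real.sqrt_lt_sqrt ht₂pos.le htm
      rwa [hsqrt_t₂] at this
    have hgt : g (Real.sqrt t) < c := by
      rw [← hgs₂]
      exact hganti (mem_Ici.2 hs₂gtsstar.le) (mem_Ici.2 (hs₂gtsstar.trans hs2lt).le) hs2lt
    exact mul_neg_of_pos_of_neg hst (by linarith)
  have hHt₁neg : H t₁ < 0 := by
    have := hmono1 ⟨le_refl 0, ht₁pos.le⟩ ⟨ht₁pos.le, le_refl t₁⟩ ht₁pos
    rw [hH0] at this
    linarith
  have hHt₂pos : 0 < H t₂ := by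
    have hrp : (t₂ : ℝ) ^ ((3:ℝ)/2) = s₂ ^ 3 := by
      rw [ht₂def, ← Real.rpow_natCast s₂ 2, ← Real.rpow_mul hs₂pos.le,
        show ((2:ℕ):ℝ) * ((3:ℝ)/2) = ((3:ℕ):ℝ) by norm_num, Real.rpow_natCast]
    have hHt₂ : H t₂ = 1/2 * s₂ ^ 4 - 1/4 * D * s₂ ^ 6 - 1/2 * β * E * s₂ ^ 3 := by
      rw [hH]
      show (1/2 : ℝ) * t₂ ^ 2 - 1/4 * D * t₂ ^ 3 - 1/2 * β * E * t₂ ^ ((3:ℝ)/2) = _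
      rw [hrp, ht₂def]
      ring
    have hgs₂' : s₂ - 3 * D / 4 * s₂ ^ 3 = 3 * β * E / 4 := by
      have h0 : s₂ - a * s₂ ^ 3 = c := hgs₂
      rw [ha, hc] at h0
      exact h0
    have hs₂sq : 2 < 3 * D * s₂ ^ 2 := by
      have h1 : shat ^ 2 < s₂ ^ 2 := pow_lt_pow_left₀ hs₂mem.1 hshatpos.le two_ne_zero
      rw [hshat2, ha] at h1
      have h2 : (1 : ℝ) / (2 * (3 * D / 4)) = 2 / (3 * D) := by
        field_simp
        ring
      rw [h2] at h1
      have h3 := (div_lt_iff₀ (by linarith : (0:ℝ) < 3 * D)).mp h1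
      linarith [h3]
    have hbe : β * E * s₂ ^ 3 = 4/3 * (3 * β * E / 4) * s₂ ^ 3 := by ring
    rw [← hgs₂'] at hbe
    have hkey2 : 1/2 * s₂ ^ 4 - 1/4 * D * s₂ ^ 6 - 1/2 * β * E * s₂ ^ 3
        = 1/12 * (s₂ ^ 4 * (3 * D * s₂ ^ 2 - 2)) := by linear_combination (-1/2 : ℝ) * hbe
    rw [hHt₂, hkey2]
    have hposmul := mul_pos (pow_pos hs₂pos 4) (show (0:ℝ) < 3 * D * s₂ ^ 2 - 2 by linarith)
    linarith [hposmul]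
  -- global max
  have hmax : ∀ t : ℝ, 0 < t → H t ≤ H t₂ := by
    intro t ht
    rcases le_total t t₁ with h | h
    · have h1 : H t ≤ H 0 := hmono1.antitoneOn ⟨le_refl 0, ht₁pos.le⟩ ⟨ht.le, h⟩ ht.le
      rw [hH0] at h1
      linarith
    · rcases le_total t t₂ with h2 | h2
      · exact hmono2.monotoneOn ⟨h, h2⟩ ⟨ht₁ltt₂.le, le_refl t₂⟩ h2
      · exact hmono3.antitoneOn (mem_Ici.2 (le_refl t₂)) (mem_Ici.2 h2) h2
  -- zeros
  obtain ⟨R₀, hR₀mem, hR₀eq⟩ :=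
    intermediate_value_Ioo ht₁ltt₂.le hHcont.continuousOn
      (show (0:ℝ) ∈ Ioo (H t₁) (H t₂) from ⟨hHt₁neg, hHt₂pos⟩)
  have hbig : ∀ u : ℝ, 0 < u → 2 < D * u → H u < 0 := by
    intro u hu hDu
    have hX : (0:ℝ) ≤ u ^ ((3:ℝ)/2) := Real.rpow_nonneg hu.le _
    have hHu : H u = 1/2 * u ^ 2 - 1/4 * D * u ^ 3 - 1/2 * β * E * u ^ ((3:ℝ)/2) := rfl
    rw [hHu]
    have hp1 : (0:ℝ) < u ^ 2 * (D * u - 2) := mul_pos (pow_pos hu 2) (by linarith)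
    have hp2 : (0:ℝ) ≤ β * E * u ^ ((3:ℝ)/2) := mul_nonneg hβE.le hX
    linarith [hp1, hp2]
  obtain ⟨T, hTgt, hHTneg⟩ : ∃ T : ℝ, t₂ < T ∧ H T < 0 := by
    refine ⟨t₂ + 4 / D, ?_, ?_⟩
    · have h4 : 0 < 4 / D := div_pos (by norm_num) hD
      linarith
    · apply hbig
      · have h4 : 0 < 4 / D := div_pos (by norm_num) hD
        linarith
      · have h1 : D * (t₂ + 4 / D) = D * t₂ + 4 := by field_simp
        linarith [mul_pos hD ht₂pos]
  obtain ⟨R₁, hR₁mem, hR₁eq⟩ :=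
    intermediate_value_Ioo' hTgt.le hHcont.continuousOn
      (show (0:ℝ) ∈ Ioo (H T) (H t₂) from ⟨hHTneg, hHt₂pos⟩)
  have hR₀pos : 0 < R₀ := lt_trans ht₁pos hR₀mem.1
  have hR₀R₁ : R₀ < R₁ := lt_trans hR₀mem.2 hR₁mem.1
  -- uniqueness of zeros
  have hzero : ∀ t : ℝ, 0 < t → H t = 0 → t = R₀ ∨ t = R₁ := by
    intro t ht he
    rcases le_total t t₁ with h | h
    · exfalso
      have h1 : H t < H 0 := hmono1 ⟨le_refl 0, ht₁pos.le⟩ ⟨ht.le, h⟩ ht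
      rw [hH0] at h1
      linarith
    · rcases le_total t t₂ with h2 | h2
      · left
        exact hmono2.injOn ⟨h, h2⟩ ⟨hR₀mem.1.le, hR₀mem.2.le⟩ (by rw [he, hR₀eq])
      · right
        exact hmono3.injOn (mem_Ici.2 h2) (mem_Ici.2 hR₁mem.1.le) (by rw [he, hR₁eq])
  -- positivity iff
  have hiff : ∀ t : ℝ, 0 < t → (0 < H t ↔ R₀ < t ∧ t < R₁) := by
    intro t ht
    constructor
    · intro hpos
      constructor
      · by_contra hle
        push_neg at hle
        rcases le_total t t₁ with h | h
        · have h1 : H t < H 0 := hmono1 ⟨le_refl 0, ht₁pos.le⟩ ⟨ht.le, h⟩ ht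
          rw [hH0] at h1
          linarith
        · have h1 : H t ≤ H R₀ :=
            hmono2.monotoneOn ⟨h, hle.trans hR₀mem.2.le⟩ ⟨hR₀mem.1.le, hR₀mem.2.le⟩ hle
          rw [hR₀eq] at h1
          linarith
      · by_contra hle
        push_neg at hle
        have h2 : t₂ ≤ t := le_trans hR₁mem.1.le hle
        have h1 : H t ≤ H R₁ := hmono3.antitoneOn (mem_Ici.2 hR₁mem.1.le) (mem_Ici.2 h2) hle
        rw [hR₁eq] at h1
        linarith
    · rintro ⟨h1, h2⟩
      rcases le_total t t₂ with h | h
      · have h3 : H R₀ < H t :=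
          hmono2 ⟨hR₀mem.1.le, hR₀mem.2.le⟩ ⟨(hR₀mem.1.trans h1).le, h⟩ h1
        rw [hR₀eq] at h3
        exact h3
      · have h3 : H R₁ < H t := hmono3 (mem_Ici.2 h) (mem_Ici.2 hR₁mem.1.le) h2
        rw [hR₁eq] at h3
        exact h3
  -- local min
  have hlocmin : IsLocalMin H t₁ := by
    apply Filter.eventually_of_mem (isOpen_Ioo.mem_nhds (⟨ht₁pos, ht₁ltt₂⟩ : t₁ ∈ Ioo 0 t₂))
    intro x hx
    rcases le_total x t₁ with h | h
    · exact hmono1.antitoneOn ⟨hx.1.le, h⟩ ⟨ht₁pos.le, le_refl t₁⟩ h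
    · exact hmono2.monotoneOn ⟨le_refl t₁, ht₁ltt₂.le⟩ ⟨h, hx.2.le⟩ h
  exact ⟨t₁, t₂, R₀, R₁, ht₁pos, ht₁ltt₂, hd₁, hd₂, hcrit, hlocmin, hHt₁neg, hmax,
    hHt₂pos, hR₀pos, hR₀R₁, hR₀eq, hR₁eq, hzero, hiff⟩

/-- under the smallness condition
`β(2b₁^{3/2}+b₂^{3/2})C₃³C₄²√(μ₁b₁+μ₂b₂+ρ√(b₁b₂)) < 2√6/3`, the function `h`
has exactly two critical points in `(0,∞)`, a local minimum `t₁` with `h(t₁) < 0`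
and a global maximum `t₂ > t₁` with `h(t₂) > 0`; moreover `h` has exactly two
zeros `0 < R₀ < R₁` and `h(t) > 0` iff `R₀ < t < R₁` (for `t > 0`). -/
theorem statement10 (μ₁ μ₂ ρ β b₁ b₂ C₃ C₄ : ℝ)
    (hμ₁ : 0 < μ₁) (hμ₂ : 0 < μ₂) (hρ : 0 < ρ) (hβ : 0 < β)
    (hb₁ : 0 < b₁) (hb₂ : 0 < b₂) (hC₃ : 0 < C₃) (hC₄ : 0 < C₄)
    (hcond : β * (2 * b₁ ^ ((3 : ℝ) / 2) + b₂ ^ ((3 : ℝ) / 2)) * C₃ ^ 3 * C₄ ^ 2 *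
        Real.sqrt (μ₁ * b₁ + μ₂ * b₂ + ρ * Real.sqrt (b₁ * b₂)) < 2 * Real.sqrt 6 / 3) :
    ∃ t₁ t₂ R₀ R₁ : ℝ,
      0 < t₁ ∧ t₁ < t₂ ∧
      deriv (hfun β (Dconst μ₁ μ₂ ρ b₁ b₂ C₄) (Econst b₁ b₂ C₃)) t₁ = 0 ∧
      deriv (hfun β (Dconst μ₁ μ₂ ρ b₁ b₂ C₄) (Econst b₁ b₂ C₃)) t₂ = 0 ∧
      (∀ t : ℝ, 0 < t →
        deriv (hfun β (Dconst μ₁ μ₂ ρ b₁ b₂ C₄) (Econst b₁ b₂ C₃)) t = 0 →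
        t = t₁ ∨ t = t₂) ∧
      IsLocalMin (hfun β (Dconst μ₁ μ₂ ρ b₁ b₂ C₄) (Econst b₁ b₂ C₃)) t₁ ∧
      hfun β (Dconst μ₁ μ₂ ρ b₁ b₂ C₄) (Econst b₁ b₂ C₃) t₁ < 0 ∧
      (∀ t : ℝ, 0 < t →
        hfun β (Dconst μ₁ μ₂ ρ b₁ b₂ C₄) (Econst b₁ b₂ C₃) t ≤
          hfun β (Dconst μ₁ μ₂ ρ b₁ b₂ C₄) (Econst b₁ b₂ C₃) t₂) ∧
      0 < hfun β (Dconst μ₁ μ₂ ρ b₁ b₂ C₄) (Econst b₁ b₂ C₃) t₂ ∧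
      0 < R₀ ∧ R₀ < R₁ ∧
      hfun β (Dconst μ₁ μ₂ ρ b₁ b₂ C₄) (Econst b₁ b₂ C₃) R₀ = 0 ∧
      hfun β (Dconst μ₁ μ₂ ρ b₁ b₂ C₄) (Econst b₁ b₂ C₃) R₁ = 0 ∧
      (∀ t : ℝ, 0 < t →
        hfun β (Dconst μ₁ μ₂ ρ b₁ b₂ C₄) (Econst b₁ b₂ C₃) t = 0 → t = R₀ ∨ t = R₁) ∧
      (∀ t : ℝ, 0 < t →
        (0 < hfun β (Dconst μ₁ μ₂ ρ b₁ b₂ C₄) (Econst b₁ b₂ C₃) t ↔ R₀ < t ∧ t < R₁)) := by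
  have hsqrtb : 0 < Real.sqrt (b₁ * b₂) := Real.sqrt_pos.2 (mul_pos hb₁ hb₂)
  have hS : 0 < μ₁ * b₁ + μ₂ * b₂ + ρ * Real.sqrt (b₁ * b₂) := by
    linarith [mul_pos hμ₁ hb₁, mul_pos hμ₂ hb₂, mul_pos hρ hsqrtb]
  have hD : 0 < Dconst μ₁ μ₂ ρ b₁ b₂ C₄ := mul_pos (pow_pos hC₄ 4) hS
  have hE : 0 < Econst b₁ b₂ C₃ := by
    unfold Econst
    have h1 : 0 < b₁ ^ ((3:ℝ)/2) := Real.rpow_pos_of_pos hb₁ _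
    have h2 : 0 < b₂ ^ ((3:ℝ)/2) := Real.rpow_pos_of_pos hb₂ _
    have h3 : 0 < C₃ ^ 3 := pow_pos hC₃ 3
    linarith [mul_pos h1 h3, mul_pos h2 h3]
  have hsqrtD : Real.sqrt (6 * Dconst μ₁ μ₂ ρ b₁ b₂ C₄) =
      Real.sqrt 6 * (C₄ ^ 2 * Real.sqrt (μ₁ * b₁ + μ₂ * b₂ + ρ * Real.sqrt (b₁ * b₂))) := by
    unfold Dconst
    rw [Real.sqrt_mul (by norm_num : (0:ℝ) ≤ 6)]
    congr 1
    rw [show (C₄:ℝ) ^ 4 = (C₄ ^ 2) ^ 2 by ring, Real.sqrt_mul (sq_nonneg _),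
      Real.sqrt_sq (sq_nonneg C₄)]
  have hkey : 3 * β * Econst b₁ b₂ C₃ / 4 *
      Real.sqrt (6 * Dconst μ₁ μ₂ ρ b₁ b₂ C₄) < 1 := by
    rw [hsqrtD]
    have h6 : Real.sqrt 6 * Real.sqrt 6 = 6 := Real.mul_self_sqrt (by norm_num)
    have h6pos : 0 < Real.sqrt 6 := Real.sqrt_pos.2 (by norm_num)
    have hmul := mul_lt_mul_of_pos_left hcond h6pos
    have heq : Real.sqrt 6 * (2 * Real.sqrt 6 / 3) = 4 := by
      linarith [h6]
    rw [heq] at hmul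
    unfold Econst
    linarith [hmul]
  exact hfun_aux β (Dconst μ₁ μ₂ ρ b₁ b₂ C₄) (Econst b₁ b₂ C₃) hβ hD hE hkey
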